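/- (Antipodal beats random: stochastic dominance) Let v be uniform on S^{d-1}. Let S_ran consist of m i.i.d. uniform points on S^{d-1}, and let S_sym consist of m/2 i.i.d. uniform points together with their antipodes (m even). Set X = A_{S_ran}(v) and Y = A_{S_sym}(v), where A_S(v) = max_{u∈S} ⟨u,v⟩. Then for every t ∈ (0, 1), P(Y > t) > P(X > t); consequently E[X] < E[Y]. -/

import Mathlib

open MeasureTheory Measure Metric Real Set
open scoped RealInnerProductSpace ENNReal NNReal Pointwise

/-- The uniform (normalized surface) probability measure on the unit sphere
in `EuclideanSpace ℝ (Fin n)`. -/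
noncomputable def uniformSphere (n : ℕ) :
    Measure (Metric.sphere (0 : EuclideanSpace ℝ (Fin n)) 1) :=
  ((volume : Measure (EuclideanSpace ℝ (Fin n))).toSphere Set.univ)⁻¹ •
    (volume : Measure (EuclideanSpace ℝ (Fin n))).toSphere

/-- The Beta distribution with parameters `a` and `b`. -/
noncomputable def betaMeasure (a b : ℝ) : Measure ℝ :=
  volume.withDensity fun t =>
    ENNReal.ofReal ((Set.Ioo (0:ℝ) 1).indicator
      (fun t => Real.Gamma (a + b) / (Real.Gamma a * Real.Gamma b) *
        t ^ (a - 1) * (1 - t) ^ (b - 1)) t)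

/-- The regularized incomplete Beta function `I_t(a, b)` (equal to `0` for `t ≤ 0`). -/
noncomputable def regIncBeta (a b t : ℝ) : ℝ :=
  (∫ s in Set.Ioc (0:ℝ) t, s ^ (a - 1) * (1 - s) ^ (b - 1)) /
    (Real.Gamma a * Real.Gamma b / Real.Gamma (a + b))

section SphereAux

variable {d : ℕ}

local notation "E" => EuclideanSpace ℝ (Fin d)
local notation "Sph" => Metric.sphere (0 : EuclideanSpace ℝ (Fin d)) 1

lemma norm_one_of_mem_sphere (u : Sph) : ‖(u : E)‖ = 1 := by
  have := u.2
  rwa [mem_sphere_zero_iff_norm] at this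

lemma toSphere_univ_ne_zero (hd : 0 < d) :
    (volume : Measure E).toSphere Set.univ ≠ 0 := by
  rw [Measure.toSphere_apply_univ]
  have h1 : (Module.finrank ℝ E : ℝ≥0∞) ≠ 0 := by
    simp [finrank_euclideanSpace_fin, hd.ne']
  have h2 : (volume : Measure E) (Metric.ball 0 1) ≠ 0 :=
    (measure_ball_pos _ _ one_pos).ne'
  exact mul_ne_zero h1 h2

lemma toSphere_univ_ne_top :
    (volume : Measure E).toSphere Set.univ ≠ ∞ := by
  rw [Measure.toSphere_apply_univ]
  exact (ENNReal.mul_lt_top (ENNReal.natCast_lt_top _) measure_ball_lt_top).ne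

lemma uniformSphere_isProb (hd : 0 < d) :
    IsProbabilityMeasure (uniformSphere d) := by
  constructor
  rw [uniformSphere, Measure.smul_apply, smul_eq_mul]
  exact ENNReal.inv_mul_cancel (toSphere_univ_ne_zero hd) toSphere_univ_ne_top

/-- The map induced on the unit sphere by a linear isometry equivalence. -/
noncomputable def sphMap (T : E ≃ₗᵢ[ℝ] E) : Sph → Sph := fun u =>
  ⟨T u, by
    rw [mem_sphere_zero_iff_norm, T.norm_map]
    exact norm_one_of_mem_sphere u⟩

lemma sphMap_continuous (T : E ≃ₗᵢ[ℝ] E) : Continuous (sphMap T) :=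
  Continuous.subtype_mk (T.continuous.comp continuous_subtype_val) _

lemma volume_preimage_linIsom (T : E ≃ₗᵢ[ℝ] E) (C : Set E) :
    (volume : Measure E) (T ⁻¹' C) = volume C := by
  have h1 : (volume : Measure E) (T.toHomeomorph.toMeasurableEquiv ⁻¹' C) =
      Measure.map T.toHomeomorph.toMeasurableEquiv volume C :=
    (T.toHomeomorph.toMeasurableEquiv.map_apply C).symm
  have h2 : Measure.map (T.toHomeomorph.toMeasurableEquiv) (volume : Measure E) = volume :=
    T.measurePreserving.map_eq
  calc (volume : Measure E) (T ⁻¹' C) = volume (T.toHomeomorph.toMeasurableEquiv ⁻¹' C) := rfl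
    _ = volume C := by rw [h1, h2]

lemma image_val_preimage_sphMap (T : E ≃ₗᵢ[ℝ] E) (A : Set Sph) :
    Subtype.val '' (sphMap T ⁻¹' A) = T ⁻¹' (Subtype.val '' A) := by
  ext x
  constructor
  · rintro ⟨u, hu, rfl⟩
    exact ⟨sphMap T u, hu, rfl⟩
  · rintro ⟨a, ha, hax⟩
    have hx : x ∈ Sph := by
      rw [mem_sphere_zero_iff_norm, ← T.norm_map x, ← hax]
      exact norm_one_of_mem_sphere a
    refine ⟨⟨x, hx⟩, ?_, rfl⟩
    have : sphMap T ⟨x, hx⟩ = a := Subtype.ext hax.symm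
    rw [Set.mem_preimage, this]
    exact ha

lemma smul_preimage_linIsom (T : E ≃ₗᵢ[ℝ] E) (B : Set E) :
    Set.Ioo (0:ℝ) 1 • (T ⁻¹' B) = T ⁻¹' (Set.Ioo (0:ℝ) 1 • B) := by
  ext x
  simp only [Set.mem_smul, Set.mem_preimage]
  constructor
  · rintro ⟨r, hr, b, hb, rfl⟩
    exact ⟨r, hr, T b, hb, (_root_.map_smul T r b).symm⟩
  · rintro ⟨r, hr, b, hb, hx⟩
    refine ⟨r, hr, T.symm b, by simpa using hb, ?_⟩
    apply T.injective
    rw [_root_.map_smul]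
    simpa using hx

lemma uniformSphere_preimage_sphMap (T : E ≃ₗᵢ[ℝ] E) {A : Set Sph}
    (hA : MeasurableSet A) :
    uniformSphere d (sphMap T ⁻¹' A) = uniformSphere d A := by
  rw [uniformSphere, Measure.smul_apply, Measure.smul_apply]
  congr 1
  have hA' : MeasurableSet (sphMap T ⁻¹' A) := (sphMap_continuous T).measurable hA
  rw [Measure.toSphere_apply' _ hA', Measure.toSphere_apply' _ hA,
    image_val_preimage_sphMap, smul_preimage_linIsom, volume_preimage_linIsom]

lemma measurable_inner_coord (x : Sph) :
    Measurable (fun u : Sph => ⟪(u : E), (x : E)⟫) :=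
  (Continuous.inner continuous_subtype_val continuous_const).measurable

lemma cap_inv (x y : Sph) {A : Set ℝ} (hA : MeasurableSet A) :
    uniformSphere d {u : Sph | ⟪(u : E), (x : E)⟫ ∈ A} =
      uniformSphere d {u : Sph | ⟪(u : E), (y : E)⟫ ∈ A} := by
  set T : E ≃ₗᵢ[ℝ] E := Submodule.reflection (ℝ ∙ ((x : E) - (y : E)))ᗮ with hT
  have hTxy : T (x : E) = (y : E) :=
    Submodule.reflection_sub (by rw [norm_one_of_mem_sphere, norm_one_of_mem_sphere])
  have hmeas : MeasurableSet {u : Sph | ⟪(u : E), (y : E)⟫ ∈ A} :=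
    measurable_inner_coord y hA
  have key := uniformSphere_preimage_sphMap T hmeas
  have hpre : sphMap T ⁻¹' {u : Sph | ⟪(u : E), (y : E)⟫ ∈ A} =
      {u : Sph | ⟪(u : E), (x : E)⟫ ∈ A} := by
    ext u
    simp only [Set.mem_preimage, Set.mem_setOf_eq, sphMap]
    have : ⟪T (u : E), (y : E)⟫ = ⟪(u : E), (x : E)⟫ := by
      rw [← hTxy, T.inner_map_map]
    rw [this]
  rw [hpre] at key
  exact key

lemma cap_neg (x : Sph) {A : Set ℝ} (hA : MeasurableSet A) :
    uniformSphere d {u : Sph | -⟪(u : E), (x : E)⟫ ∈ A} =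
      uniformSphere d {u : Sph | ⟪(u : E), (x : E)⟫ ∈ A} := by
  set T : E ≃ₗᵢ[ℝ] E := LinearIsometryEquiv.neg ℝ with hT
  have hmeas : MeasurableSet {u : Sph | ⟪(u : E), (x : E)⟫ ∈ A} :=
    measurable_inner_coord x hA
  have key := uniformSphere_preimage_sphMap T hmeas
  have hpre : sphMap T ⁻¹' {u : Sph | ⟪(u : E), (x : E)⟫ ∈ A} =
      {u : Sph | -⟪(u : E), (x : E)⟫ ∈ A} := by
    ext u
    simp only [Set.mem_preimage, Set.mem_setOf_eq, sphMap, hT,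
      LinearIsometryEquiv.coe_neg, inner_neg_left]
  rw [hpre] at key
  exact key

lemma cap_pos (hd : 0 < d) (x : Sph) {s : ℝ} (hs : s < 1) :
    0 < uniformSphere d {u : Sph | s < ⟪(u : E), (x : E)⟫} := by
  set C : Set Sph := {u : Sph | s < ⟪(u : E), (x : E)⟫} with hC
  have hCm : MeasurableSet C := measurable_inner_coord x measurableSet_Ioi
  set O : Set E := {y : E | ‖y‖ < 1} ∩ {y : E | s * ‖y‖ < ⟪y, (x : E)⟫} with hO
  have hOopen : IsOpen O := by
    refine IsOpen.inter ?_ ?_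
    · exact isOpen_lt continuous_norm continuous_const
    · exact isOpen_lt (continuous_const.mul continuous_norm)
        (Continuous.inner continuous_id continuous_const)
  have hxnorm : ‖(x : E)‖ = 1 := norm_one_of_mem_sphere x
  have hOne : ((2⁻¹ : ℝ) • (x : E)) ∈ O := by
    constructor
    · simp only [Set.mem_setOf_eq, norm_smul]
      rw [hxnorm]
      norm_num
    · simp only [Set.mem_setOf_eq, norm_smul, real_inner_smul_left]
      rw [hxnorm, real_inner_self_eq_norm_mul_norm, hxnorm]
      norm_num
      linarith
  have hsub : O ⊆ Set.Ioo (0:ℝ) 1 • (Subtype.val '' C) := by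
    rintro y ⟨hy1, hy2⟩
    simp only [Set.mem_setOf_eq] at hy1 hy2
    have hy0 : y ≠ 0 := by
      rintro rfl
      simp at hy2
    have hr : 0 < ‖y‖ := norm_pos_iff.2 hy0
    have humem : (‖y‖⁻¹ • y) ∈ Sph := by
      rw [mem_sphere_zero_iff_norm, norm_smul, norm_inv, norm_norm,
        inv_mul_cancel₀ hr.ne']
    have hinner : s < ⟪(‖y‖⁻¹ • y), (x : E)⟫ := by
      rw [real_inner_smul_left, inv_mul_eq_div, lt_div_iff₀ hr]
      exact hy2
    refine Set.mem_smul.2 ⟨‖y‖, ⟨hr, hy1⟩, ‖y‖⁻¹ • y, ⟨⟨‖y‖⁻¹ • y, humem⟩, hinner, rfl⟩, ?_⟩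
    rw [smul_smul, mul_inv_cancel₀ hr.ne', one_smul]
  have hvol : 0 < (volume : Measure E) (Set.Ioo (0:ℝ) 1 • (Subtype.val '' C)) :=
    lt_of_lt_of_le (hOopen.measure_pos volume ⟨_, hOne⟩) (measure_mono hsub)
  have hts : 0 < (volume : Measure E).toSphere C := by
    rw [Measure.toSphere_apply' _ hCm]
    refine ENNReal.mul_pos ?_ hvol.ne'
    simp [finrank_euclideanSpace_fin, hd.ne']
  rw [uniformSphere, Measure.smul_apply, smul_eq_mul]
  exact ENNReal.mul_pos (ENNReal.inv_ne_zero.2 toSphere_univ_ne_top) hts.ne'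

end SphereAux

section IndepAux

variable {Ω α : Type*} [MeasurableSpace Ω] [MeasurableSpace α]
  (μ : Measure Ω) [IsProbabilityMeasure μ] {n : ℕ}
  (v : Ω → α) (U : Fin n → Ω → α)
  (ν : Measure α) [IsProbabilityMeasure ν]

lemma tuple_law (hU : ∀ i, Measurable (U i)) (hv : Measurable v)
    (hindep : ProbabilityTheory.iIndepFun
      (fun o : Option (Fin n) => Option.elim o v U) μ)
    (hUlaw : ∀ i, Measure.map (U i) μ = ν) :
    Measure.map (fun ω i => U i ω) μ = Measure.pi (fun _ : Fin n => ν) := by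
  have hT : Measurable (fun ω (i : Fin n) => U i ω) := measurable_pi_lambda _ hU
  refine (Measure.pi_eq (μ := fun _ : Fin n => ν) fun t ht => ?_).symm
  rw [Measure.map_apply hT (MeasurableSet.univ_pi ht)]
  have hset : (fun ω (i : Fin n) => U i ω) ⁻¹' (Set.pi Set.univ t) =
      ⋂ o ∈ (Finset.univ.map (Function.Embedding.some (α := Fin n))),
        (Option.elim o v U) ⁻¹' (Option.elim o Set.univ t) := by
    ext ω
    simp [Set.mem_pi]
  rw [hset,
    hindep.measure_inter_preimage_eq_mul
      (S := Finset.univ.map (Function.Embedding.some (α := Fin n)))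
      (sets := fun o => Option.elim o Set.univ t) (fun o ho => ?_)]
  · rw [Finset.prod_map]
    congr 1
    ext i
    simp only [Function.Embedding.some_apply, Option.elim]
    rw [← Measure.map_apply (hU i) (ht i), hUlaw i]
  · simp only [Finset.mem_map] at ho
    obtain ⟨i, _, rfl⟩ := ho
    exact ht i

lemma pair_law (hU : ∀ i, Measurable (U i)) (hv : Measurable v)
    (hindep : ProbabilityTheory.iIndepFun
      (fun o : Option (Fin n) => Option.elim o v U) μ)
    (hvlaw : Measure.map v μ = ν) (hUlaw : ∀ i, Measure.map (U i) μ = ν) :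
    Measure.map (fun ω => (v ω, fun i => U i ω)) μ =
      ν.prod (Measure.pi (fun _ : Fin n => ν)) := by
  have hT : Measurable (fun ω (i : Fin n) => U i ω) := measurable_pi_lambda _ hU
  have hmeasf : ∀ o : Option (Fin n), Measurable (Option.elim o v U) := by
    rintro (_ | i)
    · exact hv
    · exact hU i
  have hST : Disjoint ({none} : Finset (Option (Fin n)))
      (Finset.univ.map (Function.Embedding.some (α := Fin n))) := by
    simp [Finset.disjoint_left]
  have hIF := hindep.indepFun_finset {none}
    (Finset.univ.map (Function.Embedding.some (α := Fin n))) hST hmeasf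
  have hnone : (none : Option (Fin n)) ∈ ({none} : Finset (Option (Fin n))) := by simp
  have hsome : ∀ i : Fin n, (some i : Option (Fin n)) ∈
      Finset.univ.map (Function.Embedding.some (α := Fin n)) := by
    intro i; simp [Finset.mem_map]
  have hpair : ProbabilityTheory.IndepFun v (fun ω i => U i ω) μ := by
    have := hIF.comp
      (φ := fun h : ({none} : Finset (Option (Fin n))) → α => h ⟨none, hnone⟩)
      (ψ := fun h : (Finset.univ.map (Function.Embedding.some (α := Fin n))) → α =>
        fun i : Fin n => h ⟨some i, hsome i⟩)
      (measurable_pi_apply _ :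
        Measurable fun h : ({none} : Finset (Option (Fin n))) → α => h ⟨none, hnone⟩)
      (measurable_pi_lambda _ fun i => measurable_pi_apply _)
    exact this
  refine (Measure.prod_eq fun A B hA hB => ?_).symm
  rw [Measure.map_apply ((hv.prodMk hT)) (hA.prod hB)]
  have : (fun ω => (v ω, fun i => U i ω)) ⁻¹' (A ×ˢ B) =
      v ⁻¹' A ∩ (fun ω i => U i ω) ⁻¹' B := rfl
  rw [this, hpair.measure_inter_preimage_eq_mul _ _ hA hB,
    ← Measure.map_apply hv hA, ← Measure.map_apply hT hB, hvlaw,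
    tuple_law μ v U ν hU hv hindep hUlaw]

lemma meas_forall_pair (hU : ∀ i, Measurable (U i)) (hv : Measurable v)
    (hindep : ProbabilityTheory.iIndepFun
      (fun o : Option (Fin n) => Option.elim o v U) μ)
    (hvlaw : Measure.map v μ = ν) (hUlaw : ∀ i, Measure.map (U i) μ = ν)
    (G : Set (α × α)) (hG : MeasurableSet G)
    (q : ℝ≥0∞) (hq : ∀ x : α, ν {u | (x, u) ∈ G} = q) :
    μ {ω | ∀ i, (v ω, U i ω) ∈ G} = q ^ n := by
  have hT : Measurable (fun ω (i : Fin n) => U i ω) := measurable_pi_lambda _ hU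
  have hGE : MeasurableSet {p : α × (Fin n → α) | ∀ i, (p.1, p.2 i) ∈ G} := by
    have : {p : α × (Fin n → α) | ∀ i, (p.1, p.2 i) ∈ G} =
        ⋂ i, (fun p : α × (Fin n → α) => (p.1, p.2 i)) ⁻¹' G := by
      ext p; simp
    rw [this]
    exact MeasurableSet.iInter fun i =>
      (measurable_fst.prodMk ((measurable_pi_apply i).comp measurable_snd)) hG
  have hset : {ω | ∀ i, (v ω, U i ω) ∈ G} =
      (fun ω => (v ω, fun i => U i ω)) ⁻¹' {p : α × (Fin n → α) | ∀ i, (p.1, p.2 i) ∈ G} := rfl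
  rw [hset, ← Measure.map_apply (hv.prodMk hT) hGE,
    pair_law μ v U ν hU hv hindep hvlaw hUlaw,
    Measure.prod_apply hGE]
  have hslice : ∀ x : α, (Measure.pi (fun _ : Fin n => ν))
      (Prod.mk x ⁻¹' {p : α × (Fin n → α) | ∀ i, (p.1, p.2 i) ∈ G}) = q ^ n := by
    intro x
    have : Prod.mk x ⁻¹' {p : α × (Fin n → α) | ∀ i, (p.1, p.2 i) ∈ G} =
        Set.pi Set.univ (fun _ : Fin n => {u : α | (x, u) ∈ G}) := by
      ext u; simp [Set.mem_pi]
    rw [this, Measure.pi_pi]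
    simp [hq x]
  simp_rw [hslice]
  simp

end IndepAux

/-- Antipodal beats random: stochastic dominance: with `v`
uniform on the sphere, `U₁, …, U_m` i.i.d. uniform (independent of `v`) forming
`S_ran`, and `W₁, …, W_{m/2}` i.i.d. uniform (independent of `v`) which together
with their antipodes form `S_sym`, setting `X = A_{S_ran}(v)` and
`Y = A_{S_sym}(v)`, we have `P(Y > t) > P(X > t)` for all `t ∈ (0,1)`, and
consequently `E[X] < E[Y]`. -/
theorem stmt11 (d m k : ℕ) (hmk : m = 2 * k) (hk : 0 < k)
    {Ω : Type*} [MeasurableSpace Ω] (μ : Measure Ω) [IsProbabilityMeasure μ]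
    (v : Ω → Metric.sphere (0 : EuclideanSpace ℝ (Fin d)) 1)
    (U : Fin m → Ω → Metric.sphere (0 : EuclideanSpace ℝ (Fin d)) 1)
    (W : Fin k → Ω → Metric.sphere (0 : EuclideanSpace ℝ (Fin d)) 1)
    (hvm : Measurable v) (hUm : ∀ i, Measurable (U i)) (hWm : ∀ j, Measurable (W j))
    (hvlaw : Measure.map v μ = uniformSphere d)
    (hUlaw : ∀ i, Measure.map (U i) μ = uniformSphere d)
    (hWlaw : ∀ j, Measure.map (W j) μ = uniformSphere d)
    (hindepU : ProbabilityTheory.iIndepFun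
      (fun o : Option (Fin m) => Option.elim o v U) μ)
    (hindepW : ProbabilityTheory.iIndepFun
      (fun o : Option (Fin k) => Option.elim o v W) μ)
    (X Y : Ω → ℝ)
    (hX : X = fun ω => Finset.univ.sup' ⟨(⟨0, by omega⟩ : Fin m), Finset.mem_univ _⟩
      fun i => ⟪(U i ω : EuclideanSpace ℝ (Fin d)), (v ω : EuclideanSpace ℝ (Fin d))⟫)
    (hY : Y = fun ω => Finset.univ.sup' ⟨(⟨0, hk⟩ : Fin k), Finset.mem_univ _⟩
      fun j => max ⟪(W j ω : EuclideanSpace ℝ (Fin d)), (v ω : EuclideanSpace ℝ (Fin d))⟫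
        (-⟪(W j ω : EuclideanSpace ℝ (Fin d)), (v ω : EuclideanSpace ℝ (Fin d))⟫)) :
    (∀ t ∈ Set.Ioo (0 : ℝ) 1, μ {ω | t < X ω} < μ {ω | t < Y ω}) ∧
    ∫ ω, X ω ∂μ < ∫ ω, Y ω ∂μ := by
  classical
  -- `Ω` is nonempty, hence we can pick a base point on the sphere
  have hΩ : Nonempty Ω := by
    rcases isEmpty_or_nonempty Ω with h | h
    · exfalso
      have h1 : (Set.univ : Set Ω) = ∅ := Set.univ_eq_empty_iff.mpr h
      have h2 := measure_univ (μ := μ)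
      rw [h1, measure_empty] at h2
      exact zero_ne_one h2
    · exact h
  obtain ⟨ω₀⟩ := hΩ
  set x₀ := v ω₀ with hx₀def
  have hd : 0 < d := by
    rcases Nat.eq_zero_or_pos d with hd0 | hd
    · exfalso
      have hx := norm_one_of_mem_sphere x₀
      have hzero : (x₀ : EuclideanSpace ℝ (Fin d)) = 0 := by
        subst hd0
        exact PiLp.ext fun i => i.elim0
      rw [hzero, norm_zero] at hx
      exact zero_ne_one hx
    · exact hd
  haveI hσP : IsProbabilityMeasure (uniformSphere d) := uniformSphere_isProb hd
  -- measurability of the inner products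
  have hinnU : ∀ i, Measurable fun ω =>
      ⟪(U i ω : EuclideanSpace ℝ (Fin d)), (v ω : EuclideanSpace ℝ (Fin d))⟫ := fun i =>
    continuous_inner.measurable.comp
      ((measurable_subtype_coe.comp (hUm i)).prodMk (measurable_subtype_coe.comp hvm))
  have hinnW : ∀ j, Measurable fun ω =>
      ⟪(W j ω : EuclideanSpace ℝ (Fin d)), (v ω : EuclideanSpace ℝ (Fin d))⟫ := fun j =>
    continuous_inner.measurable.comp
      ((measurable_subtype_coe.comp (hWm j)).prodMk (measurable_subtype_coe.comp hvm))
  have hXmeas : Measurable X := by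
    have hfun : X = Finset.univ.sup' ⟨(⟨0, by omega⟩ : Fin m), Finset.mem_univ _⟩
        (fun i (ω : Ω) =>
          ⟪(U i ω : EuclideanSpace ℝ (Fin d)), (v ω : EuclideanSpace ℝ (Fin d))⟫) := by
      rw [hX]
      funext ω
      exact (Finset.sup'_apply ⟨(⟨0, by omega⟩ : Fin m), Finset.mem_univ _⟩
        (fun i (ω : Ω) =>
          ⟪(U i ω : EuclideanSpace ℝ (Fin d)), (v ω : EuclideanSpace ℝ (Fin d))⟫) ω).symm
    rw [hfun]
    exact Finset.measurable_sup' _ fun i _ => hinnU i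
  have hYmeas : Measurable Y := by
    have hfun : Y = Finset.univ.sup' ⟨(⟨0, hk⟩ : Fin k), Finset.mem_univ _⟩
        (fun j (ω : Ω) =>
          max ⟪(W j ω : EuclideanSpace ℝ (Fin d)), (v ω : EuclideanSpace ℝ (Fin d))⟫
            (-⟪(W j ω : EuclideanSpace ℝ (Fin d)), (v ω : EuclideanSpace ℝ (Fin d))⟫)) := by
      rw [hY]
      funext ω
      exact (Finset.sup'_apply ⟨(⟨0, hk⟩ : Fin k), Finset.mem_univ _⟩
        (fun j (ω : Ω) =>
          max ⟪(W j ω : EuclideanSpace ℝ (Fin d)), (v ω : EuclideanSpace ℝ (Fin d))⟫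
            (-⟪(W j ω : EuclideanSpace ℝ (Fin d)), (v ω : EuclideanSpace ℝ (Fin d))⟫)) ω).symm
    rw [hfun]
    exact Finset.measurable_sup' _ fun j _ => (hinnW j).max (hinnW j).neg
  -- boundedness
  have habs : ∀ (a b : Metric.sphere (0 : EuclideanSpace ℝ (Fin d)) 1),
      |⟪(a : EuclideanSpace ℝ (Fin d)), (b : EuclideanSpace ℝ (Fin d))⟫| ≤ 1 := by
    intro a b
    calc |⟪(a : EuclideanSpace ℝ (Fin d)), (b : EuclideanSpace ℝ (Fin d))⟫|
        ≤ ‖(a : EuclideanSpace ℝ (Fin d))‖ * ‖(b : EuclideanSpace ℝ (Fin d))‖ :=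
          abs_real_inner_le_norm _ _
      _ = 1 := by rw [norm_one_of_mem_sphere, norm_one_of_mem_sphere, one_mul]
  have hXb : ∀ ω, |X ω| ≤ 1 := by
    intro ω
    rw [hX, abs_le]
    constructor
    · refine le_trans ?_ (Finset.le_sup' _ (Finset.mem_univ (⟨0, by omega⟩ : Fin m)))
      linarith [(abs_le.1 (habs (U ⟨0, by omega⟩ ω) (v ω))).1]
    · exact Finset.sup'_le _ _ fun i _ => (abs_le.1 (habs (U i ω) (v ω))).2
  have hY0 : ∀ ω, 0 ≤ Y ω := by
    intro ω
    rw [hY]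
    refine le_trans ?_ (Finset.le_sup' _ (Finset.mem_univ (⟨0, hk⟩ : Fin k)))
    rw [← abs_eq_max_neg]
    exact abs_nonneg _
  have hYb : ∀ ω, |Y ω| ≤ 1 := by
    intro ω
    rw [abs_le]
    constructor
    · linarith [hY0 ω]
    · rw [hY]
      refine Finset.sup'_le _ _ fun j _ => ?_
      rw [max_le_iff]
      exact ⟨(abs_le.1 (habs (W j ω) (v ω))).2,
        by linarith [(abs_le.1 (habs (W j ω) (v ω))).1]⟩
  -- the basic cap measures
  set Q : ℝ → ℝ≥0∞ := fun s => uniformSphere d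
    {u : Metric.sphere (0 : EuclideanSpace ℝ (Fin d)) 1 |
      ⟪(u : EuclideanSpace ℝ (Fin d)), (x₀ : EuclideanSpace ℝ (Fin d))⟫ ≤ s} with hQdef
  set R : ℝ → ℝ≥0∞ := fun s => uniformSphere d
    {u : Metric.sphere (0 : EuclideanSpace ℝ (Fin d)) 1 |
      |⟪(u : EuclideanSpace ℝ (Fin d)), (x₀ : EuclideanSpace ℝ (Fin d))⟫| ≤ s} with hRdef
  set P : ℝ → ℝ≥0∞ := fun s => uniformSphere d
    {u : Metric.sphere (0 : EuclideanSpace ℝ (Fin d)) 1 |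
      s < ⟪(u : EuclideanSpace ℝ (Fin d)), (x₀ : EuclideanSpace ℝ (Fin d))⟫} with hPdef
  -- distribution of X
  have hXdist : ∀ s : ℝ, μ {ω | X ω ≤ s} = Q s ^ m := by
    intro s
    have hGc : Continuous fun p :
        (Metric.sphere (0 : EuclideanSpace ℝ (Fin d)) 1) ×
          (Metric.sphere (0 : EuclideanSpace ℝ (Fin d)) 1) =>
        ⟪(p.2 : EuclideanSpace ℝ (Fin d)), (p.1 : EuclideanSpace ℝ (Fin d))⟫ :=
      Continuous.inner (continuous_subtype_val.comp continuous_snd)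
        (continuous_subtype_val.comp continuous_fst)
    have hG : MeasurableSet {p :
        (Metric.sphere (0 : EuclideanSpace ℝ (Fin d)) 1) ×
          (Metric.sphere (0 : EuclideanSpace ℝ (Fin d)) 1) |
        ⟪(p.2 : EuclideanSpace ℝ (Fin d)), (p.1 : EuclideanSpace ℝ (Fin d))⟫ ≤ s} :=
      measurableSet_le hGc.measurable measurable_const
    have happ := meas_forall_pair μ v U (uniformSphere d) hUm hvm hindepU hvlaw hUlaw
      _ hG (Q s) (fun x => cap_inv x x₀ measurableSet_Iic)
    rw [← happ]
    congr 1
    ext ω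
    simp only [Set.mem_setOf_eq, hX, Finset.sup'_le_iff, Finset.mem_univ, true_implies]
    exact ⟨fun h i => le_trans (Finset.le_sup' (fun i =>
      ⟪(U i ω : EuclideanSpace ℝ (Fin d)), (v ω : EuclideanSpace ℝ (Fin d))⟫) (Finset.mem_univ i)) h,
      fun h => Finset.sup'_le _ _ fun i _ => h i⟩
  -- distribution of Y
  have hYdist : ∀ s : ℝ, μ {ω | Y ω ≤ s} = R s ^ k := by
    intro s
    have hGc : Continuous fun p :
        (Metric.sphere (0 : EuclideanSpace ℝ (Fin d)) 1) ×
          (Metric.sphere (0 : EuclideanSpace ℝ (Fin d)) 1) =>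
        ⟪(p.2 : EuclideanSpace ℝ (Fin d)), (p.1 : EuclideanSpace ℝ (Fin d))⟫ :=
      Continuous.inner (continuous_subtype_val.comp continuous_snd)
        (continuous_subtype_val.comp continuous_fst)
    have hG : MeasurableSet {p :
        (Metric.sphere (0 : EuclideanSpace ℝ (Fin d)) 1) ×
          (Metric.sphere (0 : EuclideanSpace ℝ (Fin d)) 1) |
        |⟪(p.2 : EuclideanSpace ℝ (Fin d)), (p.1 : EuclideanSpace ℝ (Fin d))⟫| ≤ s} :=
      measurableSet_le (continuous_abs.comp hGc).measurable measurable_const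
    have hA : MeasurableSet {z : ℝ | |z| ≤ s} :=
      measurableSet_le continuous_abs.measurable measurable_const
    have happ := meas_forall_pair μ v W (uniformSphere d) hWm hvm hindepW hvlaw hWlaw
      _ hG (R s) (fun x => cap_inv x x₀ hA)
    rw [← happ]
    congr 1
    ext ω
    simp only [Set.mem_setOf_eq, hY, Finset.sup'_le_iff, Finset.mem_univ, true_implies,
      max_le_iff, abs_le, neg_le]
    have hsup : ∀ (f : Fin k → ℝ), Finset.univ.sup' ⟨(⟨0, hk⟩ : Fin k), Finset.mem_univ _⟩ f ≤ s ↔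
        ∀ j, f j ≤ s := fun f =>
      ⟨fun h j => le_trans (Finset.le_sup' f (Finset.mem_univ j)) h,
        fun h => Finset.sup'_le _ _ fun j _ => h j⟩
    rw [hsup]
    simp only [max_le_iff, neg_le]
    constructor
    · intro h j
      exact ⟨by linarith [(h j).2], (h j).1⟩
    · intro h j
      exact ⟨(h j).2, by linarith [(h j).1]⟩
  -- tail probabilities
  have hXtailR : ∀ s : ℝ, (μ {ω | s < X ω}).toReal = 1 - ((Q s).toReal) ^ m := by
    intro s
    have hc : {ω | s < X ω} = {ω | X ω ≤ s}ᶜ := by ext ω; simp [not_le]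
    rw [hc, prob_compl_eq_one_sub (show MeasurableSet {ω | X ω ≤ s} from hXmeas measurableSet_Iic), hXdist s,
      ENNReal.toReal_sub_of_le, ENNReal.toReal_one, ENNReal.toReal_pow]
    · rw [← hXdist s]; exact prob_le_one
    · exact ENNReal.one_ne_top
  have hYtailR : ∀ s : ℝ, (μ {ω | s < Y ω}).toReal = 1 - ((R s).toReal) ^ k := by
    intro s
    have hc : {ω | s < Y ω} = {ω | Y ω ≤ s}ᶜ := by ext ω; simp [not_le]
    rw [hc, prob_compl_eq_one_sub (show MeasurableSet {ω | Y ω ≤ s} from hYmeas measurableSet_Iic), hYdist s,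
      ENNReal.toReal_sub_of_le, ENNReal.toReal_one, ENNReal.toReal_pow]
    · rw [← hYdist s]; exact prob_le_one
    · exact ENNReal.one_ne_top
  -- relations between the cap measures
  have hQm : ∀ s : ℝ, MeasurableSet
      {u : Metric.sphere (0 : EuclideanSpace ℝ (Fin d)) 1 |
        ⟪(u : EuclideanSpace ℝ (Fin d)), (x₀ : EuclideanSpace ℝ (Fin d))⟫ ≤ s} := fun s =>
    measurable_inner_coord x₀ measurableSet_Iic
  have hqp : ∀ s : ℝ, (Q s).toReal + (P s).toReal = 1 := by
    intro s
    have hcompl : {u : Metric.sphere (0 : EuclideanSpace ℝ (Fin d)) 1 |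
        ⟪(u : EuclideanSpace ℝ (Fin d)), (x₀ : EuclideanSpace ℝ (Fin d))⟫ ≤ s}ᶜ =
        {u : Metric.sphere (0 : EuclideanSpace ℝ (Fin d)) 1 |
        s < ⟪(u : EuclideanSpace ℝ (Fin d)), (x₀ : EuclideanSpace ℝ (Fin d))⟫} := by
      ext u; simp [not_le]
    have h := measure_add_measure_compl (μ := uniformSphere d) (hQm s)
    rw [hcompl, measure_univ] at h
    have h2 := congrArg ENNReal.toReal h
    rwa [ENNReal.toReal_add (measure_ne_top _ _) (measure_ne_top _ _),
      ENNReal.toReal_one] at h2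
  have hrpp : ∀ s : ℝ, 0 ≤ s → (R s).toReal + ((P s).toReal + (P s).toReal) = 1 := by
    intro s hs0
    have hA0m : MeasurableSet {u : Metric.sphere (0 : EuclideanSpace ℝ (Fin d)) 1 |
        |⟪(u : EuclideanSpace ℝ (Fin d)), (x₀ : EuclideanSpace ℝ (Fin d))⟫| ≤ s} :=
      measurable_inner_coord x₀
        (measurableSet_le continuous_abs.measurable measurable_const)
    have hminusm : MeasurableSet {u : Metric.sphere (0 : EuclideanSpace ℝ (Fin d)) 1 |
        ⟪(u : EuclideanSpace ℝ (Fin d)), (x₀ : EuclideanSpace ℝ (Fin d))⟫ < -s} :=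
      measurable_inner_coord x₀ measurableSet_Iio
    have hplusm : MeasurableSet {u : Metric.sphere (0 : EuclideanSpace ℝ (Fin d)) 1 |
        s < ⟪(u : EuclideanSpace ℝ (Fin d)), (x₀ : EuclideanSpace ℝ (Fin d))⟫} :=
      measurable_inner_coord x₀ measurableSet_Ioi
    have hcover : {u : Metric.sphere (0 : EuclideanSpace ℝ (Fin d)) 1 |
        |⟪(u : EuclideanSpace ℝ (Fin d)), (x₀ : EuclideanSpace ℝ (Fin d))⟫| ≤ s}ᶜ =
        {u : Metric.sphere (0 : EuclideanSpace ℝ (Fin d)) 1 |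
          s < ⟪(u : EuclideanSpace ℝ (Fin d)), (x₀ : EuclideanSpace ℝ (Fin d))⟫} ∪
        {u : Metric.sphere (0 : EuclideanSpace ℝ (Fin d)) 1 |
          ⟪(u : EuclideanSpace ℝ (Fin d)), (x₀ : EuclideanSpace ℝ (Fin d))⟫ < -s} := by
      ext u
      simp only [Set.mem_compl_iff, Set.mem_setOf_eq, Set.mem_union, not_le, abs_le,
        not_and_or, not_le]
      tauto
    have hdisj : Disjoint
        {u : Metric.sphere (0 : EuclideanSpace ℝ (Fin d)) 1 |
          s < ⟪(u : EuclideanSpace ℝ (Fin d)), (x₀ : EuclideanSpace ℝ (Fin d))⟫}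
        {u : Metric.sphere (0 : EuclideanSpace ℝ (Fin d)) 1 |
          ⟪(u : EuclideanSpace ℝ (Fin d)), (x₀ : EuclideanSpace ℝ (Fin d))⟫ < -s} := by
      rw [Set.disjoint_left]
      intro u h1 h2
      simp only [Set.mem_setOf_eq] at h1 h2
      linarith
    have hminus : uniformSphere d {u : Metric.sphere (0 : EuclideanSpace ℝ (Fin d)) 1 |
        ⟪(u : EuclideanSpace ℝ (Fin d)), (x₀ : EuclideanSpace ℝ (Fin d))⟫ < -s} = P s := by
      have h1 : {u : Metric.sphere (0 : EuclideanSpace ℝ (Fin d)) 1 |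
          ⟪(u : EuclideanSpace ℝ (Fin d)), (x₀ : EuclideanSpace ℝ (Fin d))⟫ < -s} =
          {u : Metric.sphere (0 : EuclideanSpace ℝ (Fin d)) 1 |
          -⟪(u : EuclideanSpace ℝ (Fin d)), (x₀ : EuclideanSpace ℝ (Fin d))⟫ ∈ Set.Ioi s} := by
        ext u
        simp only [Set.mem_setOf_eq, Set.mem_Ioi]
        constructor <;> intro h <;> linarith
      rw [h1, cap_neg x₀ measurableSet_Ioi]
      rfl
    have hsplit := measure_add_measure_compl (μ := uniformSphere d) hA0m
    rw [measure_univ, hcover, measure_union hdisj hminusm, hminus] at hsplit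
    have h2 := congrArg ENNReal.toReal hsplit
    rwa [ENNReal.toReal_add (measure_ne_top _ _) (by
        exact ENNReal.add_ne_top.2 ⟨measure_ne_top _ _, measure_ne_top _ _⟩),
      ENNReal.toReal_add (measure_ne_top _ _) (measure_ne_top _ _),
      ENNReal.toReal_one] at h2
  have hppos : ∀ s : ℝ, s < 1 → 0 < (P s).toReal := fun s hs =>
    ENNReal.toReal_pos (cap_pos hd x₀ hs).ne' (measure_ne_top _ _)
  -- the master comparison
  have hmain_lt : ∀ s : ℝ, 0 ≤ s → s < 1 → μ {ω | s < X ω} < μ {ω | s < Y ω} := by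
    intro s hs0 hs1
    have h1 := hqp s
    have h2 := hrpp s hs0
    have hp := hppos s hs1
    have hr0 : (0:ℝ) ≤ (R s).toReal := ENNReal.toReal_nonneg
    have hrq : (R s).toReal < ((Q s).toReal) ^ 2 := by nlinarith [mul_pos hp hp]
    have hfin : ((R s).toReal) ^ k < ((Q s).toReal) ^ m := by
      rw [hmk, pow_mul]
      exact pow_lt_pow_left₀ hrq hr0 hk.ne'
    rw [← ENNReal.toReal_lt_toReal (measure_ne_top _ _) (measure_ne_top _ _),
      hXtailR s, hYtailR s]
    linarith
  have hmain_le : ∀ s : ℝ, μ {ω | s < X ω} ≤ μ {ω | s < Y ω} := by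
    intro s
    rcases lt_or_ge s 0 with hs | hs
    · have huniv : {ω | s < Y ω} = Set.univ := by
        ext ω
        simp only [Set.mem_setOf_eq, Set.mem_univ, iff_true]
        linarith [hY0 ω]
      rw [huniv, measure_univ]
      exact prob_le_one
    · have h1 := hqp s
      have h2 := hrpp s hs
      have hr0 : (0:ℝ) ≤ (R s).toReal := ENNReal.toReal_nonneg
      have hp0 : (0:ℝ) ≤ (P s).toReal := ENNReal.toReal_nonneg
      have hrq : (R s).toReal ≤ ((Q s).toReal) ^ 2 := by nlinarith [mul_nonneg hp0 hp0]
      have hfin : ((R s).toReal) ^ k ≤ ((Q s).toReal) ^ m := by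
        rw [hmk, pow_mul]
        exact pow_le_pow_left₀ hr0 hrq k
      rw [← ENNReal.toReal_le_toReal (measure_ne_top _ _) (measure_ne_top _ _),
        hXtailR s, hYtailR s]
      linarith
  refine ⟨fun t ht => hmain_lt t ht.1.le ht.2, ?_⟩
  -- expectations via the layer cake formula
  have hintX : Integrable X μ :=
    Integrable.mono' (integrable_const (1:ℝ)) hXmeas.aestronglyMeasurable
      (Filter.Eventually.of_forall fun ω => by rw [Real.norm_eq_abs]; exact hXb ω)
  have hintY : Integrable Y μ :=
    Integrable.mono' (integrable_const (1:ℝ)) hYmeas.aestronglyMeasurable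
      (Filter.Eventually.of_forall fun ω => by rw [Real.norm_eq_abs]; exact hYb ω)
  set FX : ℝ → ℝ := fun t => (μ {ω | t - 1 < X ω}).toReal with hFXdef
  set FY : ℝ → ℝ := fun t => (μ {ω | t - 1 < Y ω}).toReal with hFYdef
  have hlayerX : ∫ ω, X ω ∂μ + 1 = ∫ t in Set.Ioi (0:ℝ), FX t := by
    have h1 : ∫ ω, (X ω + 1) ∂μ = ∫ t in Set.Ioi (0:ℝ), (μ {ω | t < X ω + 1}).toReal :=
      (hintX.add (integrable_const 1)).integral_eq_integral_meas_lt
        (Filter.Eventually.of_forall fun ω => show (0:ℝ) ≤ X ω + 1 by linarith [(abs_le.1 (hXb ω)).1])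
    have h2 : ∀ t : ℝ, {ω | t < X ω + 1} = {ω | t - 1 < X ω} := by
      intro t; ext ω
      simp only [Set.mem_setOf_eq]
      constructor <;> intro h <;> linarith
    simp_rw [h2] at h1
    rw [integral_add hintX (integrable_const 1), integral_const, probReal_univ] at h1
    simpa using h1
  have hlayerY : ∫ ω, Y ω ∂μ + 1 = ∫ t in Set.Ioi (0:ℝ), FY t := by
    have h1 : ∫ ω, (Y ω + 1) ∂μ = ∫ t in Set.Ioi (0:ℝ), (μ {ω | t < Y ω + 1}).toReal :=
      (hintY.add (integrable_const 1)).integral_eq_integral_meas_lt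
        (Filter.Eventually.of_forall fun ω => show (0:ℝ) ≤ Y ω + 1 by linarith [(abs_le.1 (hYb ω)).1])
    have h2 : ∀ t : ℝ, {ω | t < Y ω + 1} = {ω | t - 1 < Y ω} := by
      intro t; ext ω
      simp only [Set.mem_setOf_eq]
      constructor <;> intro h <;> linarith
    simp_rw [h2] at h1
    rw [integral_add hintY (integrable_const 1), integral_const, probReal_univ] at h1
    simpa using h1
  -- integrability of the tail functions
  have hFXanti : Antitone FX := by
    intro a b hab
    exact ENNReal.toReal_mono (measure_ne_top _ _)
      (measure_mono fun ω h => by simp only [Set.mem_setOf_eq] at h ⊢; linarith)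
  have hFYanti : Antitone FY := by
    intro a b hab
    exact ENNReal.toReal_mono (measure_ne_top _ _)
      (measure_mono fun ω h => by simp only [Set.mem_setOf_eq] at h ⊢; linarith)
  have hFXnn : ∀ t, 0 ≤ FX t := fun t => ENNReal.toReal_nonneg
  have hFYnn : ∀ t, 0 ≤ FY t := fun t => ENNReal.toReal_nonneg
  have hFXle1 : ∀ t, FX t ≤ 1 := fun t =>
    le_trans (ENNReal.toReal_mono ENNReal.one_ne_top prob_le_one) (by norm_num)
  have hFYle1 : ∀ t, FY t ≤ 1 := fun t =>
    le_trans (ENNReal.toReal_mono ENNReal.one_ne_top prob_le_one) (by norm_num)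
  have hFXzero : ∀ t : ℝ, 2 ≤ t → FX t = 0 := by
    intro t ht
    have h0 : {ω | t - 1 < X ω} = ∅ := by
      ext ω
      simp only [Set.mem_setOf_eq, Set.mem_empty_iff_false, iff_false, not_lt]
      linarith [(abs_le.1 (hXb ω)).2]
    simp [hFXdef, h0]
  have hFYzero : ∀ t : ℝ, 2 ≤ t → FY t = 0 := by
    intro t ht
    have h0 : {ω | t - 1 < Y ω} = ∅ := by
      ext ω
      simp only [Set.mem_setOf_eq, Set.mem_empty_iff_false, iff_false, not_lt]
      linarith [(abs_le.1 (hYb ω)).2]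
    simp [hFYdef, h0]
  have hind : Integrable ((Set.Ioc (0:ℝ) 2).indicator fun _ => (1:ℝ))
      (volume.restrict (Set.Ioi 0)) := by
    rw [integrable_indicator_iff measurableSet_Ioc]
    refine integrableOn_const (lt_top_iff_ne_top.1 ?_)
    rw [Measure.restrict_apply measurableSet_Ioc]
    exact lt_of_le_of_lt (measure_mono Set.inter_subset_left) measure_Ioc_lt_top
  have hdom : ∀ (F : ℝ → ℝ), (∀ t, 0 ≤ F t) → (∀ t, F t ≤ 1) → (∀ t : ℝ, 2 ≤ t → F t = 0) →
      Measurable F → Integrable F (volume.restrict (Set.Ioi 0)) := by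
    intro F hnn hle hz hm
    refine Integrable.mono' hind hm.aestronglyMeasurable ?_
    refine (ae_restrict_iff' measurableSet_Ioi).2 (Filter.Eventually.of_forall fun t ht => ?_)
    rw [Real.norm_eq_abs, abs_of_nonneg (hnn t)]
    rcases le_or_gt t 2 with h | h
    · have heq : (Set.Ioc (0:ℝ) 2).indicator (fun _ => (1:ℝ)) t = 1 :=
        Set.indicator_of_mem (Set.mem_Ioc.2 ⟨ht, h⟩) _
      rw [heq]
      exact hle t
    · have heq : (Set.Ioc (0:ℝ) 2).indicator (fun _ => (1:ℝ)) t = 0 :=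
        Set.indicator_of_notMem (fun hc => absurd hc.2 (not_le.2 h)) _
      rw [heq, hz t h.le]
  have hFXint : Integrable FX (volume.restrict (Set.Ioi 0)) :=
    hdom FX hFXnn hFXle1 hFXzero hFXanti.measurable
  have hFYint : Integrable FY (volume.restrict (Set.Ioi 0)) :=
    hdom FY hFYnn hFYle1 hFYzero hFYanti.measurable
  -- pointwise comparison of the tails
  have hFle : ∀ t : ℝ, FX t ≤ FY t := fun t =>
    ENNReal.toReal_mono (measure_ne_top _ _) (hmain_le (t - 1))
  have hFlt : ∀ t ∈ Set.Ioo (1:ℝ) 2, FX t < FY t := fun t ht =>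
    (ENNReal.toReal_lt_toReal (measure_ne_top _ _) (measure_ne_top _ _)).2
      (hmain_lt (t - 1) (by linarith [ht.1]) (by linarith [ht.2]))
  have hpos : 0 < ∫ t in Set.Ioi (0:ℝ), (FY t - FX t) := by
    rw [integral_pos_iff_support_of_nonneg_ae
      (Filter.Eventually.of_forall fun t => sub_nonneg.2 (hFle t)) (hFYint.sub hFXint)]
    have hsubset : Set.Ioo (1:ℝ) 2 ⊆ Function.support fun t => FY t - FX t := fun t ht =>
      sub_ne_zero.2 (hFlt t ht).ne'
    calc (0:ℝ≥0∞) < volume.restrict (Set.Ioi 0) (Set.Ioo 1 2) := by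
          rw [Measure.restrict_apply measurableSet_Ioo]
          have hint : Set.Ioo (1:ℝ) 2 ∩ Set.Ioi 0 = Set.Ioo 1 2 :=
            Set.inter_eq_left.2 fun x hx => lt_trans one_pos hx.1
          rw [hint, Real.volume_Ioo]
          norm_num
      _ ≤ _ := measure_mono hsubset
  have hdiff : ∫ t in Set.Ioi (0:ℝ), (FY t - FX t) =
      (∫ t in Set.Ioi (0:ℝ), FY t) - ∫ t in Set.Ioi (0:ℝ), FX t :=
    integral_sub hFYint hFXint
  rw [hdiff] at hpos
  linarith [hlayerX, hlayerY, hpos]
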